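/- For every natural number k and every real λ > 0, the (2k)-th derivative of the function x ↦ 1/(e^x − 1) at λ equals the convergent series Σ_{P=1}^∞ P^{2k} · e^{−λP}; that is, iteratedDeriv (2k) (fun x => (Real.exp x − 1)⁻¹) λ = ∑'_{P : ℕ⁺} (P : ℝ)^{2k} · Real.exp (−λ·P). -/

import Mathlib

open Real

lemma my_summable (m : ℕ) (c : ℝ) (hc : 0 < c) :
    Summable (fun P : ℕ+ => ((P : ℕ) : ℝ) ^ m * Real.exp (-(c * ((P : ℕ) : ℝ)))) := by
  have hr : ‖Real.exp (-c)‖ < 1 := by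
    rw [Real.norm_eq_abs, abs_of_pos (Real.exp_pos _)]
    exact Real.exp_lt_one_iff.mpr (by linarith)
  have h : Summable (fun n : ℕ => (n:ℝ)^m * Real.exp (-c) ^ n) :=
    summable_pow_mul_geometric_of_norm_lt_one m hr
  have h2 := h.comp_injective (fun a b h => PNat.coe_injective h :
    Function.Injective (fun P : ℕ+ => (P : ℕ)))
  refine h2.congr (fun P => ?_)
  simp only [Function.comp]
  rw [← Real.exp_nat_mul]
  ring_nf

lemma my_base (l : ℝ) (hl : 0 < l) :
    ∑' P : ℕ+, Real.exp (-(l * ((P : ℕ) : ℝ))) = (Real.exp l - 1)⁻¹ := by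
  set r := Real.exp (-l) with hr
  have hr0 : 0 < r := Real.exp_pos _
  have hr1 : r < 1 := Real.exp_lt_one_iff.mpr (by linarith)
  have h1 : ∀ P : ℕ+, Real.exp (-(l * ((P : ℕ) : ℝ))) = r ^ (P : ℕ) := by
    intro P; rw [hr, ← Real.exp_nat_mul]; ring_nf
  simp_rw [h1]
  rw [← Equiv.tsum_eq Equiv.pnatEquivNat.symm (fun P : ℕ+ => r ^ (P : ℕ))]
  have h2 : ∀ n : ℕ, r ^ ((Equiv.pnatEquivNat.symm n : ℕ+) : ℕ) = r * r ^ n := by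
    intro n
    have : ((Equiv.pnatEquivNat.symm n : ℕ+) : ℕ) = n + 1 := by simp [Equiv.pnatEquivNat]
    rw [this, pow_succ]; ring
  simp_rw [h2]
  rw [tsum_mul_left, tsum_geometric_of_lt_one hr0.le hr1]
  have he : Real.exp l ≠ 0 := (Real.exp_pos _).ne'
  have h1r : 1 - r ≠ 0 := by linarith
  have hel : Real.exp l - 1 ≠ 0 := by
    have : Real.exp 0 < Real.exp l := Real.exp_lt_exp.mpr hl
    rw [Real.exp_zero] at this
    linarith
  field_simp
  rw [hr, Real.exp_neg]
  field_simp

lemma my_main (n : ℕ) : ∀ l : ℝ, 0 < l →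
    iteratedDeriv n (fun x : ℝ => (Real.exp x - 1)⁻¹) l =
      (-1 : ℝ)^n * ∑' P : ℕ+, ((P : ℕ) : ℝ) ^ n * Real.exp (-(l * ((P : ℕ) : ℝ))) := by
  induction n with
  | zero =>
    intro l hl
    simp only [iteratedDeriv_zero, pow_zero, one_mul]
    rw [← my_base l hl]
  | succ n ih =>
    intro l hl
    rw [iteratedDeriv_succ]
    have hev : (iteratedDeriv n (fun x : ℝ => (Real.exp x - 1)⁻¹)) =ᶠ[nhds l]
        (fun x => (-1 : ℝ)^n * ∑' P : ℕ+, ((P : ℕ) : ℝ) ^ n * Real.exp (-(x * ((P : ℕ) : ℝ)))) := by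
      filter_upwards [isOpen_Ioi.mem_nhds (Set.mem_Ioi.mpr hl)] with x hx
      exact ih x hx
    rw [hev.deriv_eq, deriv_const_mul_field]
    -- derivative of the tsum
    have hd : HasDerivAt
        (fun x : ℝ => ∑' P : ℕ+, ((P : ℕ) : ℝ) ^ n * Real.exp (-(x * ((P : ℕ) : ℝ))))
        (∑' P : ℕ+, (-(((P : ℕ) : ℝ) ^ (n+1))) * Real.exp (-(l * ((P : ℕ) : ℝ)))) l := by
      have hu : Summable (fun P : ℕ+ => ((P : ℕ) : ℝ) ^ (n+1) * Real.exp (-((l/2) * ((P : ℕ) : ℝ)))) :=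
        my_summable (n+1) (l/2) (by linarith)
      have := hasDerivAt_tsum_of_isPreconnected hu (isOpen_Ioi (a := l/2))
        (isPreconnected_Ioi)
        (g := fun (P : ℕ+) (x : ℝ) => ((P : ℕ) : ℝ) ^ n * Real.exp (-(x * ((P : ℕ) : ℝ))))
        (g' := fun (P : ℕ+) (x : ℝ) => (-(((P : ℕ) : ℝ) ^ (n+1))) * Real.exp (-(x * ((P : ℕ) : ℝ))))
        ?_ ?_ (Set.mem_Ioi.mpr (by linarith : l/2 < l)) (my_summable n l hl)
        (Set.mem_Ioi.mpr (by linarith : l/2 < l))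
      · exact this
      · intro P x hx
        have h1 : HasDerivAt (fun x : ℝ => -(x * ((P : ℕ) : ℝ))) (-((P : ℕ) : ℝ)) x := by
          have h0 := ((hasDerivAt_id x).mul_const ((P : ℕ) : ℝ)).neg
          rw [one_mul] at h0
          exact h0
        have h2 := h1.exp
        have h3 := h2.const_mul (((P : ℕ) : ℝ) ^ n)
        refine h3.congr_deriv ?_
        ring
      · intro P x hx
        have hPpos : (0:ℝ) < ((P : ℕ) : ℝ) := by exact_mod_cast P.pos
        rw [norm_mul, norm_neg, norm_pow, Real.norm_eq_abs, Real.norm_eq_abs,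
          abs_of_pos hPpos, abs_of_pos (Real.exp_pos _)]
        have hx' := Set.mem_Ioi.mp hx
        have hexp : Real.exp (-(x * ((P : ℕ) : ℝ))) ≤ Real.exp (-(l/2 * ((P : ℕ) : ℝ))) :=
          Real.exp_le_exp.mpr (by nlinarith)
        exact mul_le_mul_of_nonneg_left hexp (by positivity)
    rw [hd.deriv]
    rw [pow_succ]
    have : ∑' P : ℕ+, (-(((P : ℕ) : ℝ) ^ (n+1))) * Real.exp (-(l * ((P : ℕ) : ℝ)))
        = -∑' P : ℕ+, (((P : ℕ) : ℝ) ^ (n+1)) * Real.exp (-(l * ((P : ℕ) : ℝ))) := by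
      rw [← tsum_neg]; congr 1; ext P; ring
    rw [this]; ring

theorem iteratedDeriv_inv_exp_sub_one_eq_tsum
    (k : ℕ) (l : ℝ) (hl : 0 < l) :
    Summable (fun P : ℕ+ => ((P : ℕ) : ℝ) ^ (2 * k) * Real.exp (-(l * ((P : ℕ) : ℝ))))
      ∧
    iteratedDeriv (2 * k) (fun x : ℝ => (Real.exp x - 1)⁻¹) l =
      ∑' P : ℕ+, ((P : ℕ) : ℝ) ^ (2 * k) * Real.exp (-(l * ((P : ℕ) : ℝ))) := by
  refine ⟨my_summable _ _ hl, ?_⟩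
  rw [my_main (2*k) l hl, pow_mul]
  norm_num
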